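/- Let n ≥ 1 and let A be an n × 2d real matrix of rank n. Denote by φ(x) ∈ ℝ^{2d} the vector with entries φ_l(x) and by φ^{(m)}(x) the vector with entries φ_l^{(m)}(x). If x₀ ∈ ℝ satisfies A·φ(x₀) = 0, then there exists m with 1 ≤ m ≤ 2d − 1 such that A·φ^{(m)}(x₀) ≠ 0. -/

import Mathlib

open Complex in
lemma hasDerivAt_mul_cexp (a : ℝ) (w : ℂ) (x : ℝ) :
    HasDerivAt (fun x : ℝ => w * Complex.exp (a * x * I))
      (w * ((a : ℂ) * I) * Complex.exp (a * x * I)) x := by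
  have h0 : HasDerivAt (fun x : ℝ => ((x : ℝ) : ℂ)) 1 x := by
    simpa using (hasDerivAt_id x).ofReal_comp
  have h1 : HasDerivAt (fun x : ℝ => ((a : ℂ) * x * I)) ((a : ℂ) * I) x := by
    have := (h0.const_mul ((a : ℂ) * I))
    simpa [mul_comm, mul_assoc, mul_left_comm] using this
  have h2 := (h1.cexp).const_mul w
  simpa [mul_comm, mul_assoc, mul_left_comm] using h2

open Complex in
lemma iter_sin (a : ℝ) (m : ℕ) :
    iteratedDeriv m (fun x : ℝ => Real.sin (a * x)) =
      fun x : ℝ => ((((a : ℂ) * I) ^ m * Complex.exp (a * x * I)).im) := by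
  induction m with
  | zero =>
      funext x
      simp only [iteratedDeriv_zero, pow_zero, one_mul]
      rw [show ((a : ℂ) * x * I) = ((a * x : ℝ) : ℂ) * I by push_cast; ring,
        Complex.exp_ofReal_mul_I_im]
  | succ m ih =>
      rw [iteratedDeriv_succ, ih]
      funext x
      have h := hasDerivAt_mul_cexp a (((a : ℂ) * I) ^ m) x
      have h2 : HasDerivAt (fun x : ℝ => ((((a:ℂ)*I)^m * Complex.exp (a*x*I)).im))
          ((((a:ℂ)*I)^m * ((a:ℂ)*I) * Complex.exp (a*x*I)).im) x :=
        (Complex.imCLM.hasFDerivAt.comp_hasDerivAt x h)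
      rw [h2.deriv]
      ring_nf

open Complex in
lemma iter_cos (a : ℝ) (m : ℕ) :
    iteratedDeriv m (fun x : ℝ => Real.cos (a * x)) =
      fun x : ℝ => ((((a : ℂ) * I) ^ m * Complex.exp (a * x * I)).re) := by
  induction m with
  | zero =>
      funext x
      simp only [iteratedDeriv_zero, pow_zero, one_mul]
      rw [show ((a : ℂ) * x * I) = ((a * x : ℝ) : ℂ) * I by push_cast; ring,
        Complex.exp_ofReal_mul_I_re]
  | succ m ih =>
      rw [iteratedDeriv_succ, ih]
      funext x
      have h := hasDerivAt_mul_cexp a (((a : ℂ) * I) ^ m) x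
      have h2 : HasDerivAt (fun x : ℝ => ((((a:ℂ)*I)^m * Complex.exp (a*x*I)).re))
          ((((a:ℂ)*I)^m * ((a:ℂ)*I) * Complex.exp (a*x*I)).re) x :=
        (Complex.reCLM.hasFDerivAt.comp_hasDerivAt x h)
      rw [h2.deriv]
      ring_nf


noncomputable def phi (l : ℕ) : ℝ → ℝ := fun x =>
  if l % 2 = 1 then Real.sin ((((l + 1) / 2 : ℕ) : ℝ) * x)
  else Real.cos ((((l + 1) / 2 : ℕ) : ℝ) * x)

lemma phi_odd (k : ℕ) : phi (2 * k + 1) = fun x => Real.sin (((k + 1 : ℕ) : ℝ) * x) := by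
  funext x
  unfold phi
  rw [if_pos (by omega : (2 * k + 1) % 2 = 1),
    (by omega : (2 * k + 1 + 1) / 2 = k + 1)]

lemma phi_even (k : ℕ) : phi (2 * k + 2) = fun x => Real.cos (((k + 1 : ℕ) : ℝ) * x) := by
  funext x
  unfold phi
  rw [if_neg (by omega : ¬ (2 * k + 2) % 2 = 1),
    (by omega : (2 * k + 2 + 1) / 2 = k + 1)]

open Complex in
lemma combo (s r : ℝ) (A Ek : ℂ) (hA : (starRingEnd ℂ) A = -A) (m : ℕ) :
    Ek * ((r : ℂ) - I * s) * A ^ m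
      + (starRingEnd ℂ) (Ek * ((r : ℂ) - I * s)) * (-A) ^ m
      = 2 * ((s : ℂ) * (((A ^ m * Ek).im : ℝ) : ℂ) + (r : ℂ) * (((A ^ m * Ek).re : ℝ) : ℂ)) := by
  have h1 : (-A) ^ m = (starRingEnd ℂ) (A ^ m) := by rw [map_pow, hA]
  rw [h1, ← map_mul]
  rw [show Ek * ((r : ℂ) - I * s) * A ^ m = (A ^ m * Ek) * ((r : ℂ) - I * s) from by ring]
  rw [Complex.add_conj]
  have hre : ((A ^ m * Ek) * ((r : ℂ) - I * s)).re
      = (A ^ m * Ek).re * r + (A ^ m * Ek).im * s := by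
    simp [Complex.mul_re, Complex.mul_im]
  rw [hre]
  push_cast
  ring

open Complex Finset in
lemma key (d : ℕ) (x₀ : ℝ) (c : Fin (2 * d) → ℝ)
    (h : ∀ m : Fin (2 * d), ∑ l, c l * iteratedDeriv (m : ℕ) (phi ((l : ℕ) + 1)) x₀ = 0) :
    c = 0 := by
  set e : Fin d × Fin 2 ≃ Fin (2 * d) := finProdFinEquiv.trans (finCongr (Nat.mul_comm d 2))
    with he
  have heval : ∀ (k : Fin d) (p : Fin 2), ((e (k, p) : ℕ)) = (p : ℕ) + 2 * (k : ℕ) :=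
    fun k p => rfl
  set a : Fin d → ℝ := fun k => (((k : ℕ) + 1 : ℕ) : ℝ) with ha
  set E : Fin d → ℂ := fun k => Complex.exp ((a k : ℂ) * x₀ * I) with hE
  set u : Fin d → ℂ := fun k => E k * ((c (e (k, 1)) : ℂ) - I * (c (e (k, 0)) : ℂ)) with hu
  set W : Fin d × Fin 2 → ℂ := fun q => if q.2 = 0 then u q.1 else (starRingEnd ℂ) (u q.1)
    with hW
  set Z : Fin d × Fin 2 → ℂ := fun q => if q.2 = 0 then (a q.1 : ℂ) * I else -((a q.1 : ℂ) * I)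
    with hZ
  have hkk : ∀ k k' : Fin d, (((k:ℕ):ℝ) + 1 = ((k':ℕ):ℝ) + 1) → k = k' := by
    intro k k' hh
    ext
    exact_mod_cast add_right_cancel hh
  have hZinj : Function.Injective Z := by
    rintro ⟨k, p⟩ ⟨k', p'⟩ hq
    have hnn : (0:ℝ) ≤ ((k:ℕ):ℝ) := Nat.cast_nonneg _
    have hnn' : (0:ℝ) ≤ ((k':ℕ):ℝ) := Nat.cast_nonneg _
    fin_cases p <;> fin_cases p' <;> simp only [hZ] at hq <;>
      have h2 := congrArg Complex.im hq <;> simp [ha] at h2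
    · exact Prod.ext (by ext; exact_mod_cast h2) rfl
    · exact absurd h2 (by intro hh; linarith)
    · exact absurd h2 (by intro hh; linarith)
    · exact Prod.ext (by ext; exact_mod_cast h2) rfl
  have hsum : ∀ m : Fin (2 * d), ∑ j, (W ∘ e.symm) j * (Z ∘ e.symm) j ^ ((m : ℕ)) = 0 := by
    intro m
    have hC : ∑ l : Fin (2 * d),
        (c l : ℂ) * ((iteratedDeriv (m : ℕ) (phi ((l : ℕ) + 1)) x₀ : ℝ) : ℂ) = 0 := by
      calc ∑ l : Fin (2 * d),
            (c l : ℂ) * ((iteratedDeriv (m : ℕ) (phi ((l : ℕ) + 1)) x₀ : ℝ) : ℂ)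
          = ((∑ l, c l * iteratedDeriv (m : ℕ) (phi ((l : ℕ) + 1)) x₀ : ℝ) : ℂ) := by
            push_cast; rfl
        _ = 0 := by rw [h m]; simp
    have hstep : ∑ j, (W ∘ e.symm) j * (Z ∘ e.symm) j ^ ((m : ℕ))
        = ∑ q : Fin d × Fin 2, W q * Z q ^ ((m : ℕ)) :=
      Equiv.sum_comp e.symm (fun q => W q * Z q ^ ((m : ℕ)))
    have hper : ∀ k : Fin d, ∑ p : Fin 2, W (k, p) * Z (k, p) ^ ((m : ℕ))
        = 2 * ((c (e (k, 0)) : ℂ)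
                * ((iteratedDeriv (m : ℕ) (phi ((e (k, 0) : ℕ) + 1)) x₀ : ℝ) : ℂ)
             + (c (e (k, 1)) : ℂ)
                * ((iteratedDeriv (m : ℕ) (phi ((e (k, 1) : ℕ) + 1)) x₀ : ℝ) : ℂ)) := by
      intro k
      have e0 : iteratedDeriv (m : ℕ) (phi ((e (k, (0 : Fin 2)) : ℕ) + 1)) x₀
          = (((a k : ℂ) * I) ^ (m : ℕ) * E k).im := by
        rw [show ((e (k, (0 : Fin 2)) : ℕ) + 1) = 2 * (k : ℕ) + 1 by simp only [heval, Fin.val_zero, Fin.val_one]; omega,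
          phi_odd, iter_sin]
      have e1 : iteratedDeriv (m : ℕ) (phi ((e (k, (1 : Fin 2)) : ℕ) + 1)) x₀
          = (((a k : ℂ) * I) ^ (m : ℕ) * E k).re := by
        rw [show ((e (k, (1 : Fin 2)) : ℕ) + 1) = 2 * (k : ℕ) + 2 by simp only [heval, Fin.val_zero, Fin.val_one]; omega,
          phi_even, iter_cos]
      rw [Fin.sum_univ_two, e0, e1]
      have hW0 : W (k, 0) = u k := by simp [hW]
      have hW1 : W (k, 1) = (starRingEnd ℂ) (u k) := by simp [hW]
      have hZ0 : Z (k, 0) = (a k : ℂ) * I := by simp [hZ]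
      have hZ1 : Z (k, 1) = -((a k : ℂ) * I) := by simp [hZ]
      rw [hW0, hW1, hZ0, hZ1, hu]
      exact combo (c (e (k, 0))) (c (e (k, 1))) ((a k : ℂ) * I) (E k)
        (by simp [Complex.conj_I, mul_comm]) (m : ℕ)
    rw [hstep, Fintype.sum_prod_type, Finset.sum_congr rfl (fun k _ => hper k),
      ← Finset.mul_sum]
    have hre : ∑ k : Fin d,
        ((c (e (k, 0)) : ℂ) * ((iteratedDeriv (m : ℕ) (phi ((e (k, 0) : ℕ) + 1)) x₀ : ℝ) : ℂ)
         + (c (e (k, 1)) : ℂ) * ((iteratedDeriv (m : ℕ) (phi ((e (k, 1) : ℕ) + 1)) x₀ : ℝ) : ℂ))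
        = ∑ l : Fin (2 * d),
            (c l : ℂ) * ((iteratedDeriv (m : ℕ) (phi ((l : ℕ) + 1)) x₀ : ℝ) : ℂ) := by
      rw [← Equiv.sum_comp e (fun l =>
        (c l : ℂ) * ((iteratedDeriv (m : ℕ) (phi ((l : ℕ) + 1)) x₀ : ℝ) : ℂ)),
        Fintype.sum_prod_type]
      exact Finset.sum_congr rfl (fun k _ => (Fin.sum_univ_two (fun p : Fin 2 =>
        (c (e (k, p)) : ℂ) * ((iteratedDeriv (m : ℕ) (phi ((e (k, p) : ℕ) + 1)) x₀ : ℝ) : ℂ))).symm)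
    rw [hre, hC, mul_zero]
  have hw0 : (W ∘ e.symm) = 0 :=
    Matrix.eq_zero_of_forall_pow_sum_mul_pow_eq_zero
      (hZinj.comp e.symm.injective) (fun i => hsum i)
  have hu0 : ∀ k : Fin d, u k = 0 := by
    intro k
    have h4 := congrFun hw0 (e (k, 0))
    simpa [hW, Equiv.symm_apply_apply] using h4
  have hc0 : ∀ (k : Fin d) (p : Fin 2), c (e (k, p)) = 0 := by
    intro k p
    have h3 : ((c (e (k, 1)) : ℂ) - I * (c (e (k, 0)) : ℂ)) = 0 := by
      rcases mul_eq_zero.mp (hu0 k) with hE0 | h3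
      · exact absurd hE0 (Complex.exp_ne_zero _)
      · exact h3
    have hre := congrArg Complex.re h3
    have him := congrArg Complex.im h3
    simp at hre him
    fin_cases p
    · simpa using him
    · simpa using hre
  funext l
  rw [← e.apply_symm_apply l]
  obtain ⟨k, p⟩ := e.symm l
  simpa using hc0 k p

theorem exists_deriv_mulVec_ne_zero (d n : ℕ) (hd : 1 ≤ d) (hn : 1 ≤ n)
    (A : Matrix (Fin n) (Fin (2 * d)) ℝ) (hrank : A.rank = n)
    (x₀ : ℝ) (hx₀ : A.mulVec (fun l => phi ((l : ℕ) + 1) x₀) = 0) :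
    ∃ m : ℕ, 1 ≤ m ∧ m ≤ 2 * d - 1 ∧
      A.mulVec (fun l => iteratedDeriv m (phi ((l : ℕ) + 1)) x₀) ≠ 0 := by
  by_contra hcon
  push_neg at hcon
  have hall : ∀ m : Fin (2 * d),
      A.mulVec (fun l => iteratedDeriv (m : ℕ) (phi ((l : ℕ) + 1)) x₀) = 0 := by
    intro m
    rcases Nat.eq_zero_or_pos (m : ℕ) with hm | hm
    · rw [hm]
      simpa [iteratedDeriv_zero] using hx₀
    · exact hcon (m : ℕ) hm (by omega)
  have hrow : ∀ i, A i = 0 := by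
    intro i
    apply key d x₀ (A i)
    intro m
    have h5 := congrFun (hall m) i
    simpa [Matrix.mulVec, dotProduct] using h5
  have hA0 : A = 0 := by
    ext i j
    exact congrFun (hrow i) j
  rw [hA0, Matrix.rank_zero] at hrank
  omega
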